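/- arXiv:math/9903073 — 3 statements merged into one kernel-verified Lean document; each statement's English description precedes it below -/
import Mathlib

section
/- For every nonnegative integer m and t ≥ 1, ∫₁ᵗ s^{-2} h₀(s) N_m(s) ds = N_{m+1}(t) - h(t) N_m(t); in particular this integral is bounded by N_{m+1}(t). -/
open MeasureTheory Real

noncomputable def h0 (γ t : ℝ) : ℝ := ∫ s in (1:ℝ)..t, s ^ (-γ)

noncomputable def hfun (γ t : ℝ) : ℝ := ∫ s in Set.Ioi (1:ℝ), s ^ (-γ) * (max t s)⁻¹

noncomputable def Nfun (γ : ℝ) (m : ℕ) (t : ℝ) : ℝ := ∫ s in (1:ℝ)..t, s ^ (-γ) * (hfun γ s) ^ m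

noncomputable def Qfun (γ : ℝ) (m : ℕ) (t : ℝ) : ℝ :=
  ∫ s in Set.Ioi (1:ℝ), s ^ (-γ) * (max t s)⁻¹ * (hfun γ s) ^ m

noncomputable def Pfun (γ : ℝ) (m : ℕ) (t : ℝ) : ℝ :=
  ∫ s in Set.Ioi (1:ℝ), s ^ (-γ) * hfun γ (max t s) * (hfun γ s) ^ m

noncomputable def Rfun (γ : ℝ) (m : ℕ) (t : ℝ) : ℝ :=
  ∫ s in Set.Ioi t, s ^ (-2 : ℝ) * Pfun γ m s

noncomputable def gfun (γ t : ℝ) : ℝ := t⁻¹ * h0 γ t + t ^ (-γ) / γ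

lemma rpow_contOn (γ : ℝ) : ContinuousOn (fun s : ℝ => s ^ (-γ)) (Set.Ioi 0) :=
  fun x hx => (Real.continuousAt_rpow_const x (-γ) (Or.inl (ne_of_gt hx))).continuousWithinAt

lemma rpow_iint {γ a b : ℝ} (ha : 0 < a) (hb : 0 < b) :
    IntervalIntegrable (fun s : ℝ => s ^ (-γ)) volume a b := by
  apply intervalIntegral.intervalIntegrable_rpow
  right
  intro h
  rcases h with ⟨h1, h2⟩
  rcases le_total a b with hab | hab
  · simp [min_eq_left hab, max_eq_right hab] at h1 h2; linarith
  · simp [min_eq_right hab, max_eq_left hab] at h1 h2; linarith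

lemma h0_hasDeriv (γ : ℝ) {x : ℝ} (hx : 0 < x) :
    HasDerivAt (h0 γ) (x ^ (-γ)) x := by
  apply intervalIntegral.integral_hasDerivAt_right (rpow_iint one_pos hx)
  · exact ContinuousOn.stronglyMeasurableAtFilter isOpen_Ioi (rpow_contOn γ) x hx
  · exact Real.continuousAt_rpow_const x (-γ) (Or.inl (ne_of_gt hx))

lemma hfun_eq_g {γ : ℝ} (hγ : 0 < γ) {u : ℝ} (hu : 1 ≤ u) : hfun γ u = gfun γ u := by
  have hu0 : (0:ℝ) < u := lt_of_lt_of_le one_pos hu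
  have hcont : ContinuousOn (fun s : ℝ => s ^ (-γ) * (max u s)⁻¹) (Set.Icc 1 u) := by
    apply ContinuousOn.mul ((rpow_contOn γ).mono (fun x hx => lt_of_lt_of_le one_pos hx.1))
    apply ContinuousOn.inv₀ ((continuous_const.max continuous_id).continuousOn)
    intro x hx
    exact ne_of_gt (lt_of_lt_of_le hu0 (le_max_left _ _))
  have hint1 : IntegrableOn (fun s : ℝ => s ^ (-γ) * (max u s)⁻¹) (Set.Ioc 1 u) := by
    exact (hcont.integrableOn_Icc).mono_set Set.Ioc_subset_Icc_self
  have hint2 : IntegrableOn (fun s : ℝ => s ^ (-γ) * (max u s)⁻¹) (Set.Ioi u) := by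
    apply ((integrableOn_Ioi_rpow_of_lt (by linarith : -(γ+1) < -1) hu0)).congr_fun
      (fun x hx => ?_) measurableSet_Ioi
    have hx : u < x := hx
    have hx0 : (0:ℝ) < x := lt_trans hu0 hx
    rw [max_eq_right hx.le, ← Real.rpow_neg_one x, ← Real.rpow_add hx0]
    ring_nf
  have hsplit : (Set.Ioi (1:ℝ)) = Set.Ioc 1 u ∪ Set.Ioi u := (Set.Ioc_union_Ioi_eq_Ioi hu).symm
  rw [hfun, hsplit, setIntegral_union (Set.Ioc_disjoint_Ioi le_rfl) measurableSet_Ioi hint1 hint2]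
  have e1 : ∫ s in Set.Ioc (1:ℝ) u, s ^ (-γ) * (max u s)⁻¹ = u⁻¹ * h0 γ u := by
    rw [show (∫ s in Set.Ioc (1:ℝ) u, s ^ (-γ) * (max u s)⁻¹)
        = ∫ s in Set.Ioc (1:ℝ) u, s ^ (-γ) * u⁻¹ from
      setIntegral_congr_fun measurableSet_Ioc (fun x hx => by rw [max_eq_left hx.2])]
    rw [integral_mul_const, h0, intervalIntegral.integral_of_le hu, mul_comm]
  have e2 : ∫ s in Set.Ioi u, s ^ (-γ) * (max u s)⁻¹ = u ^ (-γ) / γ := by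
    rw [show (∫ s in Set.Ioi u, s ^ (-γ) * (max u s)⁻¹)
        = ∫ s in Set.Ioi u, s ^ (-(γ+1)) from
      setIntegral_congr_fun measurableSet_Ioi (fun x hx => by
        have hx : u < x := hx
        have hx0 : (0:ℝ) < x := lt_trans hu0 hx
        rw [max_eq_right hx.le, ← Real.rpow_neg_one x, ← Real.rpow_add hx0]
        ring_nf)]
    rw [integral_Ioi_rpow_of_lt (by linarith : -(γ+1) < -1) hu0]
    rw [show -(γ+1) + 1 = -γ by ring]
    field_simp
  rw [e1, e2, gfun]

lemma hfun_max (γ : ℝ) (s : ℝ) : hfun γ s = hfun γ (max 1 s) := by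
  unfold hfun
  apply setIntegral_congr_fun measurableSet_Ioi
  intro x hx
  have hx : (1:ℝ) < x := hx
  dsimp only
  rcases le_total s 1 with h | h
  · rw [max_eq_left h, max_eq_right (le_of_lt (lt_of_le_of_lt h hx)),
      max_eq_right hx.le]
  · rw [max_eq_right h]

lemma hfun_cont {γ : ℝ} (hγ : 0 < γ) : Continuous (hfun γ) := by
  have hg : ContinuousOn (gfun γ) (Set.Ioi 0) := by
    intro x hx
    have h1 : HasDerivAt (gfun γ) ((-(x^2)⁻¹) * h0 γ x + x⁻¹ * x ^ (-γ)
        + (-γ * x ^ (-γ - 1)) / γ) x := by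
      exact (((hasDerivAt_inv (ne_of_gt hx)).mul (h0_hasDeriv γ hx)).add
        ((Real.hasDerivAt_rpow_const (Or.inl (ne_of_gt hx))).div_const γ))
    exact h1.continuousAt.continuousWithinAt
  have heq : hfun γ = fun s => gfun γ (max 1 s) := by
    funext s
    rw [hfun_max γ s, hfun_eq_g hγ (le_max_left 1 s)]
  rw [heq]
  exact hg.comp_continuous (continuous_const.max continuous_id)
    (fun x => lt_of_lt_of_le one_pos (le_max_left 1 x))

lemma gfun_hasDeriv {γ : ℝ} (hγ : 0 < γ) {x : ℝ} (hx : 0 < x) :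
    HasDerivAt (gfun γ) (-(x ^ (-2:ℝ)) * h0 γ x) x := by
  have h1 : HasDerivAt (gfun γ) (((-(x^2)⁻¹) * h0 γ x + x⁻¹ * x ^ (-γ))
      + (-γ * x ^ (-γ - 1)) / γ) x :=
    ((hasDerivAt_inv (ne_of_gt hx)).mul (h0_hasDeriv γ hx)).add
      ((Real.hasDerivAt_rpow_const (Or.inl (ne_of_gt hx))).div_const γ)
  convert h1 using 1
  have e1 : x⁻¹ * x ^ (-γ) = x ^ (-γ - 1) := by
    rw [← Real.rpow_neg_one x, ← Real.rpow_add hx]; ring_nf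
  have e2 : (-γ * x ^ (-γ - 1)) / γ = -(x ^ (-γ - 1)) := by
    field_simp
  have e3 : x ^ (-2:ℝ) = (x^2)⁻¹ := by
    rw [Real.rpow_neg hx.le, show (2:ℝ) = ((2:ℕ):ℝ) by norm_num, Real.rpow_natCast]
  rw [e1, e2, e3]; ring

lemma Nfun_hasDeriv {γ : ℝ} (hγ : 0 < γ) (m : ℕ) {x : ℝ} (hx : 1 ≤ x) :
    HasDerivAt (Nfun γ m) (x ^ (-γ) * (hfun γ x) ^ m) x := by
  have hx0 : (0:ℝ) < x := lt_of_lt_of_le one_pos hx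
  have hcont : ContinuousOn (fun s : ℝ => s ^ (-γ) * hfun γ s ^ m) (Set.Ioi 0) :=
    (rpow_contOn γ).mul (((hfun_cont hγ).pow m).continuousOn)
  apply intervalIntegral.integral_hasDerivAt_right
  · apply ContinuousOn.intervalIntegrable
    apply hcont.mono
    rw [Set.uIcc_of_le hx]
    exact fun y hy => lt_of_lt_of_le one_pos hy.1
  · exact ContinuousOn.stronglyMeasurableAtFilter isOpen_Ioi hcont x hx0
  · exact ((Real.continuousAt_rpow_const x (-γ) (Or.inl (ne_of_gt hx0)))).mul
      (((hfun_cont hγ).pow m).continuousAt)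


theorem stmt_9 (γ t : ℝ) (hγ : 0 < γ) (hγ1 : γ ≤ 1) (ht : 1 ≤ t) (m : ℕ) :
    (∫ s in (1:ℝ)..t, s ^ (-2 : ℝ) * h0 γ s * Nfun γ m s)
      = Nfun γ (m + 1) t - hfun γ t * Nfun γ m t ∧
    (∫ s in (1:ℝ)..t, s ^ (-2 : ℝ) * h0 γ s * Nfun γ m s) ≤ Nfun γ (m + 1) t := by
  have hF : ∀ x ∈ Set.uIcc (1:ℝ) t,
      HasDerivAt (fun y => Nfun γ (m+1) y - gfun γ y * Nfun γ m y)
      (x ^ (-2:ℝ) * h0 γ x * Nfun γ m x) x := by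
    intro x hxmem
    rw [Set.uIcc_of_le ht] at hxmem
    have hx1 : 1 ≤ x := hxmem.1
    have hx0 : (0:ℝ) < x := by linarith
    have hd := (Nfun_hasDeriv hγ (m+1) hx1).sub
      ((gfun_hasDeriv hγ hx0).mul (Nfun_hasDeriv hγ m hx1))
    refine hd.congr_deriv ?_
    rw [← hfun_eq_g hγ hx1, pow_succ]; ring
  have hint : IntervalIntegrable (fun x => x ^ (-2:ℝ) * h0 γ x * Nfun γ m x) volume 1 t := by
    apply ContinuousOn.intervalIntegrable
    intro x hxmem
    have hxmem' := hxmem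
    rw [Set.uIcc_of_le ht] at hxmem'
    have hx1 : 1 ≤ x := hxmem'.1
    have hx0 : (0:ℝ) < x := by linarith
    exact (((Real.continuousAt_rpow_const x (-2:ℝ) (Or.inl (ne_of_gt hx0))).mul
      (h0_hasDeriv γ hx0).continuousAt).mul
      (Nfun_hasDeriv hγ m hx1).continuousAt).continuousWithinAt
  have key := intervalIntegral.integral_eq_sub_of_hasDerivAt hF hint
  have hN10 : Nfun γ (m+1) 1 = 0 := by rw [Nfun, intervalIntegral.integral_same]
  have hN0 : Nfun γ m 1 = 0 := by rw [Nfun, intervalIntegral.integral_same]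
  have heq : (∫ s in (1:ℝ)..t, s ^ (-2 : ℝ) * h0 γ s * Nfun γ m s)
      = Nfun γ (m + 1) t - hfun γ t * Nfun γ m t := by
    rw [key, hN10, hN0, hfun_eq_g hγ ht]; ring
  refine ⟨heq, ?_⟩
  rw [heq]
  apply sub_le_self
  have hhnn : ∀ s : ℝ, 0 ≤ hfun γ s := by
    intro s
    apply setIntegral_nonneg measurableSet_Ioi
    intro x hx
    have hx1 : (1:ℝ) < x := hx
    exact mul_nonneg (Real.rpow_nonneg (by linarith) _)
      (inv_nonneg.mpr (le_trans (by linarith) (le_max_right s x)))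
  have hNnn : 0 ≤ Nfun γ m t := by
    apply intervalIntegral.integral_nonneg ht
    intro x hx
    exact mul_nonneg (Real.rpow_nonneg (by linarith [hx.1]) _) (pow_nonneg (hhnn x) m)
  exact mul_nonneg (hhnn t) hNnn
end

section
/- For nonnegative integers i, j and 1 ≤ a ≤ b, ∫ₐᵇ t^{-2} N_i(t) N_j(t) dt ≤ ∫ₐᵇ t^{-2} h₀(t) N_{i+j}(t) dt. -/
open MeasureTheory Real

lemma hint (γ : ℝ) (hγ : 0 < γ) (t : ℝ) :
    IntegrableOn (fun s : ℝ => s ^ (-γ) * (max t s)⁻¹) (Set.Ioi 1) := by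
  have hmeas : Measurable fun s : ℝ => s ^ (-γ) * (max t s)⁻¹ := by fun_prop
  have hdom : IntegrableOn (fun s : ℝ => s ^ (-γ - 1)) (Set.Ioi 1) :=
    integrableOn_Ioi_rpow_of_lt (by linarith) one_pos
  refine Integrable.mono hdom hmeas.aestronglyMeasurable ?_
  filter_upwards [ae_restrict_mem measurableSet_Ioi] with s hs
  have hs1 : (1:ℝ) < s := hs
  have hs0 : (0:ℝ) < s := by linarith
  have h1 : s ^ (-γ - 1) = s ^ (-γ) * s⁻¹ := by
    rw [Real.rpow_sub hs0, Real.rpow_one, div_eq_mul_inv]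
  rw [Real.norm_eq_abs, Real.norm_eq_abs, h1,
    abs_of_nonneg (mul_nonneg (Real.rpow_nonneg hs0.le _) (inv_nonneg.2 (le_trans hs0.le (le_max_right t s)))),
    abs_of_nonneg (mul_nonneg (Real.rpow_nonneg hs0.le _) (inv_nonneg.2 hs0.le))]
  exact mul_le_mul_of_nonneg_left (inv_anti₀ hs0 (le_max_right t s))
    (Real.rpow_nonneg hs0.le _)

lemma h_anti (γ : ℝ) (hγ : 0 < γ) : Antitone (hfun γ) := by
  intro t1 t2 h12
  refine setIntegral_mono_on (hint γ hγ t2) (hint γ hγ t1) measurableSet_Ioi ?_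
  intro s hs
  have hs0 : (0:ℝ) < s := lt_trans one_pos hs
  refine mul_le_mul_of_nonneg_left ?_ (Real.rpow_nonneg hs0.le _)
  exact inv_anti₀ (lt_of_lt_of_le hs0 (le_max_right t1 s)) (max_le_max h12 le_rfl)

lemma h_nonneg (γ t : ℝ) : 0 ≤ hfun γ t := by
  refine setIntegral_nonneg measurableSet_Ioi fun s hs => ?_
  have hs0 : (0:ℝ) < s := lt_trans one_pos hs
  exact mul_nonneg (Real.rpow_nonneg hs0.le _) (inv_nonneg.2 (le_trans hs0.le (le_max_right t s)))

lemma F_int (γ : ℝ) (hγ : 0 < γ) (m : ℕ) (t : ℝ) :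
    IntegrableOn (fun s : ℝ => s ^ (-γ) * hfun γ s ^ m) (Set.Ioc 1 t) := by
  have hm : Measurable (hfun γ) := (h_anti γ hγ).measurable
  have hmeas : Measurable fun s : ℝ => s ^ (-γ) * hfun γ s ^ m := by fun_prop
  have hc : IntegrableOn (fun _ : ℝ => hfun γ 1 ^ m) (Set.Ioc 1 t) :=
    integrableOn_const measure_Ioc_lt_top.ne
  refine Integrable.mono' hc hmeas.aestronglyMeasurable ?_
  filter_upwards [ae_restrict_mem measurableSet_Ioc] with s hs
  have hs1 : (1:ℝ) < s := hs.1
  have hs0 : (0:ℝ) < s := by linarith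
  rw [Real.norm_eq_abs, abs_of_nonneg (mul_nonneg (Real.rpow_nonneg hs0.le _)
    (pow_nonneg (h_nonneg γ s) m))]
  calc s ^ (-γ) * hfun γ s ^ m ≤ 1 * hfun γ 1 ^ m := by
        refine mul_le_mul ?_ ?_ (pow_nonneg (h_nonneg γ s) m) zero_le_one
        · exact Real.rpow_le_one_of_one_le_of_nonpos hs1.le (by linarith)
        · exact pow_le_pow_left₀ (h_nonneg γ s) (h_anti γ hγ hs1.le) m
    _ = hfun γ 1 ^ m := one_mul _

lemma key (γ : ℝ) (hγ : 0 < γ) (i j : ℕ) (t : ℝ) (ht : 1 ≤ t) :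
    (∫ s in (1:ℝ)..t, s ^ (-γ) * hfun γ s ^ i) * (∫ s in (1:ℝ)..t, s ^ (-γ) * hfun γ s ^ j)
      ≤ (∫ s in (1:ℝ)..t, s ^ (-γ)) * ∫ s in (1:ℝ)..t, s ^ (-γ) * hfun γ s ^ (i + j) := by
  rw [intervalIntegral.integral_of_le ht, intervalIntegral.integral_of_le ht,
    intervalIntegral.integral_of_le ht, intervalIntegral.integral_of_le ht]
  set μ := volume.restrict (Set.Ioc (1:ℝ) t) with hμ
  set F : ℕ → ℝ → ℝ := fun m s => s ^ (-γ) * hfun γ s ^ m with hF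
  set w : ℝ → ℝ := fun s => s ^ (-γ) with hw
  have intF : ∀ m, Integrable (F m) μ := fun m => F_int γ hγ m t
  have intw : Integrable w μ := by
    have := intF 0
    simpa only [hF, pow_zero, mul_one] using this
  have I1 : Integrable (fun p : ℝ × ℝ => w p.1 * F (i + j) p.2) (μ.prod μ) :=
    intw.mul_prod (intF (i + j))
  have I2 : Integrable (fun p : ℝ × ℝ => F (i + j) p.1 * w p.2) (μ.prod μ) :=
    (intF (i + j)).mul_prod intw
  have I3 : Integrable (fun p : ℝ × ℝ => F i p.1 * F j p.2) (μ.prod μ) :=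
    (intF i).mul_prod (intF j)
  have I4 : Integrable (fun p : ℝ × ℝ => F j p.1 * F i p.2) (μ.prod μ) :=
    (intF j).mul_prod (intF i)
  have I12 : Integrable (fun p : ℝ × ℝ =>
      w p.1 * F (i + j) p.2 + F (i + j) p.1 * w p.2) (μ.prod μ) := I1.add I2
  have I34 : Integrable (fun p : ℝ × ℝ =>
      F i p.1 * F j p.2 + F j p.1 * F i p.2) (μ.prod μ) := I3.add I4
  have key2 : 0 ≤ ∫ p : ℝ × ℝ, w p.1 * w p.2 *
      ((hfun γ p.1 ^ i - hfun γ p.2 ^ i) * (hfun γ p.1 ^ j - hfun γ p.2 ^ j)) ∂(μ.prod μ) := by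
    rw [hμ, Measure.prod_restrict]
    refine setIntegral_nonneg (measurableSet_Ioc.prod measurableSet_Ioc) ?_
    rintro ⟨s, u⟩ hp
    obtain ⟨hs, hu⟩ := hp
    have hs0 : (0:ℝ) < s := lt_trans one_pos hs.1
    have hu0 : (0:ℝ) < u := lt_trans one_pos hu.1
    refine mul_nonneg (mul_nonneg (Real.rpow_nonneg hs0.le _) (Real.rpow_nonneg hu0.le _)) ?_
    rcases le_total (hfun γ s) (hfun γ u) with hc | hc
    · have h1 : hfun γ s ^ i - hfun γ u ^ i ≤ 0 :=
        sub_nonpos.2 (pow_le_pow_left₀ (h_nonneg γ s) hc i)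
      have h2 : hfun γ s ^ j - hfun γ u ^ j ≤ 0 :=
        sub_nonpos.2 (pow_le_pow_left₀ (h_nonneg γ s) hc j)
      nlinarith
    · have h1 : 0 ≤ hfun γ s ^ i - hfun γ u ^ i :=
        sub_nonneg.2 (pow_le_pow_left₀ (h_nonneg γ u) hc i)
      have h2 : 0 ≤ hfun γ s ^ j - hfun γ u ^ j :=
        sub_nonneg.2 (pow_le_pow_left₀ (h_nonneg γ u) hc j)
      exact mul_nonneg h1 h2
  have e : (fun p : ℝ × ℝ => w p.1 * w p.2 *
        ((hfun γ p.1 ^ i - hfun γ p.2 ^ i) * (hfun γ p.1 ^ j - hfun γ p.2 ^ j)))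
      = fun p : ℝ × ℝ => (w p.1 * F (i + j) p.2 + F (i + j) p.1 * w p.2)
          - (F i p.1 * F j p.2 + F j p.1 * F i p.2) := by
    funext p
    simp only [hF, hw, pow_add]
    ring
  rw [e, integral_sub I12 I34, integral_add I1 I2, integral_add I3 I4,
    integral_prod_mul, integral_prod_mul, integral_prod_mul, integral_prod_mul] at key2
  nlinarith [key2]

theorem stmt_11 (γ a b : ℝ) (hγ : 0 < γ) (hγ1 : γ ≤ 1) (ha : 1 ≤ a) (hab : a ≤ b)
    (i j : ℕ) :
    (∫ t in a..b, t ^ (-2 : ℝ) * Nfun γ i t * Nfun γ j t)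
      ≤ ∫ t in a..b, t ^ (-2 : ℝ) * h0 γ t * Nfun γ (i + j) t := by
  have hb1 : (1:ℝ) ≤ b := le_trans ha hab
  have hIcc : Set.uIcc (1:ℝ) b = Set.Icc 1 b := Set.uIcc_of_le hb1
  have hintI : ∀ m : ℕ, IntegrableOn (fun s : ℝ => s ^ (-γ) * hfun γ s ^ m) (Set.Icc 1 b) := by
    intro m
    rw [integrableOn_Icc_iff_integrableOn_Ioc]
    exact F_int γ hγ m b
  have hcontN : ∀ m : ℕ, ContinuousOn (Nfun γ m) (Set.Icc 1 b) := by
    intro m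
    have := intervalIntegral.continuousOn_primitive_interval (μ := volume) (a := (1:ℝ))
      (b := b) (f := fun s : ℝ => s ^ (-γ) * hfun γ s ^ m) (by rw [hIcc]; exact hintI m)
    rw [hIcc] at this
    exact this
  have hconth0 : ContinuousOn (h0 γ) (Set.Icc 1 b) := by
    have h0' : IntegrableOn (fun s : ℝ => s ^ (-γ)) (Set.Icc 1 b) := by
      have := hintI 0
      simpa only [pow_zero, mul_one] using this
    have := intervalIntegral.continuousOn_primitive_interval (μ := volume) (a := (1:ℝ))
      (b := b) (f := fun s : ℝ => s ^ (-γ)) (by rw [hIcc]; exact h0')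
    rw [hIcc] at this
    exact this
  have hsub : Set.Icc a b ⊆ Set.Icc 1 b := Set.Icc_subset_Icc_left ha
  have hct : ContinuousOn (fun t : ℝ => t ^ (-2:ℝ)) (Set.Icc a b) := by
    refine ContinuousOn.rpow_const continuousOn_id fun x hx => Or.inl ?_
    have : (0:ℝ) < x := lt_of_lt_of_le one_pos (le_trans ha hx.1)
    exact ne_of_gt this
  have c1 : ContinuousOn (fun t => t ^ (-2:ℝ) * Nfun γ i t * Nfun γ j t) (Set.Icc a b) :=
    (hct.mul ((hcontN i).mono hsub)).mul ((hcontN j).mono hsub)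
  have c2 : ContinuousOn (fun t => t ^ (-2:ℝ) * h0 γ t * Nfun γ (i + j) t) (Set.Icc a b) :=
    (hct.mul (hconth0.mono hsub)).mul ((hcontN (i + j)).mono hsub)
  have habIcc : Set.uIcc a b = Set.Icc a b := Set.uIcc_of_le hab
  refine intervalIntegral.integral_mono_on hab
    ((habIcc ▸ c1).intervalIntegrable) ((habIcc ▸ c2).intervalIntegrable) ?_
  intro t ht
  have h1t : (1:ℝ) ≤ t := le_trans ha ht.1
  have ht0 : (0:ℝ) ≤ t := by linarith
  have ht2 : (0:ℝ) ≤ t ^ (-2:ℝ) := Real.rpow_nonneg ht0 _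
  have hk := key γ hγ i j t h1t
  simp only [Nfun, h0]
  calc t ^ (-2:ℝ) * (∫ s in (1:ℝ)..t, s ^ (-γ) * hfun γ s ^ i)
        * (∫ s in (1:ℝ)..t, s ^ (-γ) * hfun γ s ^ j)
      = t ^ (-2:ℝ) * ((∫ s in (1:ℝ)..t, s ^ (-γ) * hfun γ s ^ i)
        * (∫ s in (1:ℝ)..t, s ^ (-γ) * hfun γ s ^ j)) := by ring
    _ ≤ t ^ (-2:ℝ) * ((∫ s in (1:ℝ)..t, s ^ (-γ))
        * (∫ s in (1:ℝ)..t, s ^ (-γ) * hfun γ s ^ (i + j))) :=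
        mul_le_mul_of_nonneg_left hk ht2
    _ = t ^ (-2:ℝ) * (∫ s in (1:ℝ)..t, s ^ (-γ))
        * (∫ s in (1:ℝ)..t, s ^ (-γ) * hfun γ s ^ (i + j)) := by ring
end

section
/- For every integer m ≥ 1 and all t ≥ 1, h(t) Q_{m-1}(t) ≤ 2 Q_m(t), where h(t) = ∫₁^∞ s^{-γ}(max(t,s))^{-1} ds and Q_m(t) = ∫₁^∞ s^{-γ}(max(t,s))^{-1} h(s)^m ds. -/
open MeasureTheory Real Set

section aux
variable {γ : ℝ}

lemma kernel_nonneg (t : ℝ) {s : ℝ} (hs : 1 ≤ s) : 0 ≤ s ^ (-γ) * (max t s)⁻¹ := by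
  have hs0 : (0:ℝ) < s := lt_of_lt_of_le one_pos hs
  have : (0:ℝ) < max t s := lt_of_lt_of_le hs0 (le_max_right t s)
  positivity

lemma kernel_le' {b s : ℝ} (hs : 1 ≤ s) (hb : s ≤ b) :
    s ^ (-γ) * b⁻¹ ≤ s ^ (-γ - 1) := by
  have hs0 : (0:ℝ) < s := lt_of_lt_of_le one_pos hs
  calc s ^ (-γ) * b⁻¹ ≤ s ^ (-γ) * s⁻¹ := by
        have h2 : (0:ℝ) ≤ s ^ (-γ) := rpow_nonneg hs0.le _
        gcongr
    _ = s ^ (-γ - 1) := by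
        rw [← rpow_neg_one s, ← rpow_add hs0]; ring_nf

lemma kernel_le (t : ℝ) {s : ℝ} (hs : 1 ≤ s) :
    s ^ (-γ) * (max t s)⁻¹ ≤ s ^ (-γ - 1) := kernel_le' hs (le_max_right t s)

lemma kernel_measurable (t : ℝ) : Measurable fun s : ℝ => s ^ (-γ) * (max t s)⁻¹ := by
  fun_prop

lemma integrableOn_pow (hγ : 0 < γ) : IntegrableOn (fun s : ℝ => s ^ (-γ - 1)) (Ioi 1) :=
  integrableOn_Ioi_rpow_of_lt (by linarith) one_pos

end aux

section aux2
variable {γ : ℝ}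

lemma integrableOn_kernel (hγ : 0 < γ) (t : ℝ) :
    IntegrableOn (fun s : ℝ => s ^ (-γ) * (max t s)⁻¹) (Ioi 1) := by
  refine Integrable.mono (integrableOn_pow hγ) ((kernel_measurable t).aestronglyMeasurable.restrict) ?_
  filter_upwards [ae_restrict_mem measurableSet_Ioi] with s hs
  have hs1 : (1:ℝ) ≤ s := le_of_lt hs
  rw [Real.norm_eq_abs, Real.norm_eq_abs, abs_of_nonneg (kernel_nonneg t hs1)]
  exact (kernel_le t hs1).trans (le_abs_self _)

lemma hfun_nonneg (hγ : 0 < γ) (t : ℝ) : 0 ≤ hfun γ t := by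
  apply setIntegral_nonneg measurableSet_Ioi
  intro s hs
  exact kernel_nonneg t (le_of_lt hs)

lemma hfun_anti (hγ : 0 < γ) : Antitone (hfun γ) := by
  intro t1 t2 h12
  apply setIntegral_mono_on (integrableOn_kernel hγ t2) (integrableOn_kernel hγ t1)
    measurableSet_Ioi
  intro s hs
  have hs1 : (1:ℝ) ≤ s := le_of_lt hs
  have hs0 : (0:ℝ) < s := lt_of_lt_of_le one_pos hs1
  have h1 : (0:ℝ) < max t1 s := lt_of_lt_of_le hs0 (le_max_right _ _)
  have h2 : max t1 s ≤ max t2 s := max_le_max h12 le_rfl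
  have h3 : (0:ℝ) ≤ s ^ (-γ) := rpow_nonneg hs0.le _
  gcongr

lemma hfun_measurable (hγ : 0 < γ) : Measurable (hfun γ) := (hfun_anti hγ).measurable

lemma integrableOn_A (hγ : 0 < γ) (t : ℝ) (k : ℕ) :
    IntegrableOn (fun s : ℝ => s ^ (-γ) * (max t s)⁻¹ * hfun γ s ^ k) (Ioi 1) := by
  have hmeas : Measurable fun s : ℝ => s ^ (-γ) * (max t s)⁻¹ * hfun γ s ^ k :=
    (kernel_measurable t).mul ((hfun_measurable hγ).pow_const k)
  refine Integrable.mono ((integrableOn_pow hγ).mul_const (hfun γ 1 ^ k))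
    hmeas.aestronglyMeasurable.restrict ?_
  filter_upwards [ae_restrict_mem measurableSet_Ioi] with s hs
  have hs1 : (1:ℝ) ≤ s := le_of_lt hs
  have hs0 : (0:ℝ) < s := lt_of_lt_of_le one_pos hs1
  have hh0 : 0 ≤ hfun γ s := hfun_nonneg hγ s
  have hh1 : hfun γ s ≤ hfun γ 1 := hfun_anti hγ hs1
  rw [Real.norm_eq_abs, Real.norm_eq_abs,
    abs_of_nonneg (mul_nonneg (kernel_nonneg t hs1) (pow_nonneg hh0 k))]
  refine le_trans ?_ (le_abs_self _)
  have h1 : s ^ (-γ) * (max t s)⁻¹ ≤ s ^ (-γ - 1) := kernel_le t hs1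
  have h2 : hfun γ s ^ k ≤ hfun γ 1 ^ k := pow_le_pow_left₀ hh0 hh1 k
  exact mul_le_mul h1 h2 (pow_nonneg hh0 k) (rpow_nonneg hs0.le _)

end aux2

section aux3
variable {γ : ℝ}

lemma key_pointwise (hγ : 0 < γ) (k : ℕ) {t s u : ℝ} (ht : 1 ≤ t) (hs : 1 ≤ s) (hu : 1 ≤ u) :
    (max t s)⁻¹ * (max t u)⁻¹ * hfun γ s ^ k ≤
      (max t s)⁻¹ * (max s u)⁻¹ * hfun γ s ^ k +
        (max t u)⁻¹ * (max u s)⁻¹ * hfun γ u ^ k := by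
  have hts : (0:ℝ) < max t s := lt_of_lt_of_le one_pos (hs.trans (le_max_right t s))
  have htu : (0:ℝ) < max t u := lt_of_lt_of_le one_pos (hu.trans (le_max_right t u))
  have hsu : (0:ℝ) < max s u := lt_of_lt_of_le one_pos (hu.trans (le_max_right s u))
  have hpk : (0:ℝ) ≤ hfun γ s ^ k := pow_nonneg (hfun_nonneg hγ s) k
  have hpk' : (0:ℝ) ≤ hfun γ u ^ k := pow_nonneg (hfun_nonneg hγ u) k
  rcases le_or_gt (max s u) (max t u) with hle | hlt
  · have h1 : (max t u)⁻¹ ≤ (max s u)⁻¹ := by gcongr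
    have h2 : (max t s)⁻¹ * (max t u)⁻¹ * hfun γ s ^ k ≤
        (max t s)⁻¹ * (max s u)⁻¹ * hfun γ s ^ k := by
      gcongr
    refine h2.trans (le_add_of_nonneg_right ?_)
    positivity
  · -- max t u < max s u forces max s u = s, u ≤ s, t ≤ s
    have hus : u < max s u := lt_of_le_of_lt (le_max_right t u) hlt
    have hmax : max s u = s := by
      rcases max_cases s u with ⟨h, _⟩ | ⟨h, h'⟩
      · exact h
      · exact absurd h (by rw [h] at hus; exact (lt_irrefl u hus).elim)
    have hts' : t < s := by
      have := lt_of_le_of_lt (le_max_left t u) hlt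
      rwa [hmax] at this
    have hus' : u < s := by rwa [hmax] at hus
    have hmaxts : max t s = s := max_eq_right hts'.le
    have hmaxus : max u s = s := max_eq_right hus'.le
    have hhh : hfun γ s ^ k ≤ hfun γ u ^ k :=
      pow_le_pow_left₀ (hfun_nonneg hγ s) (hfun_anti hγ hus'.le) k
    have h2 : (max t s)⁻¹ * (max t u)⁻¹ * hfun γ s ^ k ≤
        (max t u)⁻¹ * (max u s)⁻¹ * hfun γ u ^ k := by
      rw [hmaxts, hmaxus, mul_comm (s⁻¹) ((max t u)⁻¹)]
      gcongr
    refine h2.trans (le_add_of_nonneg_left ?_)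
    positivity

end aux3

section aux4
variable {γ : ℝ}

lemma integrable_prod_aux (hγ : 0 < γ) (t : ℝ) (k : ℕ) (B : ℝ × ℝ → ℝ) (hB : Measurable B)
    (hge : ∀ z : ℝ × ℝ, z.1 ∈ Ioi (1:ℝ) → z.2 ∈ Ioi (1:ℝ) → z.2 ≤ B z) :
    Integrable (fun z : ℝ × ℝ =>
        z.1 ^ (-γ) * (max t z.1)⁻¹ * hfun γ z.1 ^ k * (z.2 ^ (-γ) * (B z)⁻¹))
      ((volume.restrict (Ioi (1:ℝ))).prod (volume.restrict (Ioi (1:ℝ)))) := by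
  have hmeasA : Measurable fun s : ℝ => s ^ (-γ) * (max t s)⁻¹ * hfun γ s ^ k :=
    (kernel_measurable t).mul ((hfun_measurable hγ).pow_const k)
  have hdom : Integrable (fun z : ℝ × ℝ =>
      (z.1 ^ (-γ) * (max t z.1)⁻¹ * hfun γ z.1 ^ k) * z.2 ^ (-γ - 1))
      ((volume.restrict (Ioi (1:ℝ))).prod (volume.restrict (Ioi (1:ℝ)))) :=
    Integrable.mul_prod (integrableOn_A hγ t k) (integrableOn_pow hγ)
  have hmeas : Measurable (fun z : ℝ × ℝ =>
      z.1 ^ (-γ) * (max t z.1)⁻¹ * hfun γ z.1 ^ k * (z.2 ^ (-γ) * (B z)⁻¹)) := by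
    have m1 : Measurable fun z : ℝ × ℝ => z.1 ^ (-γ) * (max t z.1)⁻¹ * hfun γ z.1 ^ k :=
      hmeasA.comp measurable_fst
    have m2 : Measurable fun z : ℝ × ℝ => z.2 ^ (-γ) := by fun_prop
    exact m1.mul (m2.mul hB.inv)
  refine hdom.mono hmeas.aestronglyMeasurable ?_
  have hae : ∀ᵐ z ∂((volume.restrict (Ioi (1:ℝ))).prod (volume.restrict (Ioi (1:ℝ)))),
      z ∈ (Ioi (1:ℝ)) ×ˢ (Ioi (1:ℝ)) := by
    rw [Measure.prod_restrict]
    exact ae_restrict_mem (measurableSet_Ioi.prod measurableSet_Ioi)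
  filter_upwards [hae] with z hz
  obtain ⟨hz1, hz2⟩ := hz
  have h1 : (1:ℝ) ≤ z.1 := le_of_lt hz1
  have h2 : (1:ℝ) ≤ z.2 := le_of_lt hz2
  have hz20 : (0:ℝ) < z.2 := lt_of_lt_of_le one_pos h2
  have hAnn : 0 ≤ z.1 ^ (-γ) * (max t z.1)⁻¹ * hfun γ z.1 ^ k :=
    mul_nonneg (kernel_nonneg t h1) (pow_nonneg (hfun_nonneg hγ z.1) k)
  have hBz : z.2 ≤ B z := hge z hz1 hz2
  have hB0 : (0:ℝ) < B z := lt_of_lt_of_le hz20 hBz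
  have hker : 0 ≤ z.2 ^ (-γ) * (B z)⁻¹ := by positivity
  rw [Real.norm_eq_abs, Real.norm_eq_abs, abs_of_nonneg (mul_nonneg hAnn hker)]
  refine le_trans ?_ (le_abs_self _)
  exact mul_le_mul_of_nonneg_left (kernel_le' h2 hBz) hAnn

end aux4

theorem stmt_13 (γ t : ℝ) (hγ : 0 < γ) (hγ1 : γ ≤ 1) (ht : 1 ≤ t) (m : ℕ) (hm : 1 ≤ m) :
    hfun γ t * Qfun γ (m - 1) t ≤ 2 * Qfun γ m t := by
  set μ := volume.restrict (Ioi (1:ℝ)) with hμdef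
  set k := m - 1 with hkdef
  have intF : Integrable (fun z : ℝ × ℝ =>
      z.1 ^ (-γ) * (max t z.1)⁻¹ * hfun γ z.1 ^ k * (z.2 ^ (-γ) * (max t z.2)⁻¹))
      (μ.prod μ) :=
    integrable_prod_aux hγ t k (fun z => max t z.2) (by fun_prop)
      (fun z _ _ => le_max_right t z.2)
  have intG : Integrable (fun z : ℝ × ℝ =>
      z.1 ^ (-γ) * (max t z.1)⁻¹ * hfun γ z.1 ^ k * (z.2 ^ (-γ) * (max z.1 z.2)⁻¹))
      (μ.prod μ) :=
    integrable_prod_aux hγ t k (fun z => max z.1 z.2) (by fun_prop)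
      (fun z _ _ => le_max_right z.1 z.2)
  have intGswap : Integrable (fun z : ℝ × ℝ =>
      z.2 ^ (-γ) * (max t z.2)⁻¹ * hfun γ z.2 ^ k * (z.1 ^ (-γ) * (max z.2 z.1)⁻¹))
      (μ.prod μ) := intG.swap
  have e1 : hfun γ t * Qfun γ k t = ∫ z, (z.1 ^ (-γ) * (max t z.1)⁻¹ * hfun γ z.1 ^ k *
      (z.2 ^ (-γ) * (max t z.2)⁻¹)) ∂(μ.prod μ) := by
    rw [integral_prod _ intF]
    have inner : ∀ s : ℝ, (∫ u, s ^ (-γ) * (max t s)⁻¹ * hfun γ s ^ k *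
        (u ^ (-γ) * (max t u)⁻¹) ∂μ) = s ^ (-γ) * (max t s)⁻¹ * hfun γ s ^ k * hfun γ t :=
      fun s => by rw [integral_const_mul]; rfl
    simp only [inner]
    rw [integral_mul_const]
    rw [mul_comm]
    rfl
  have e2 : Qfun γ m t = ∫ z, (z.1 ^ (-γ) * (max t z.1)⁻¹ * hfun γ z.1 ^ k *
      (z.2 ^ (-γ) * (max z.1 z.2)⁻¹)) ∂(μ.prod μ) := by
    rw [integral_prod _ intG]
    have inner : ∀ s : ℝ, (∫ u, s ^ (-γ) * (max t s)⁻¹ * hfun γ s ^ k *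
        (u ^ (-γ) * (max s u)⁻¹) ∂μ) = s ^ (-γ) * (max t s)⁻¹ * hfun γ s ^ k * hfun γ s :=
      fun s => by rw [integral_const_mul]; rfl
    simp only [inner]
    have : ∀ s : ℝ, s ^ (-γ) * (max t s)⁻¹ * hfun γ s ^ k * hfun γ s
        = s ^ (-γ) * (max t s)⁻¹ * hfun γ s ^ m := by
      intro s
      rw [mul_assoc, ← pow_succ, hkdef, Nat.sub_add_cancel hm]
    simp only [this]
    rfl
  have e3 : (∫ z, (z.2 ^ (-γ) * (max t z.2)⁻¹ * hfun γ z.2 ^ k *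
      (z.1 ^ (-γ) * (max z.2 z.1)⁻¹)) ∂(μ.prod μ)) = ∫ z, (z.1 ^ (-γ) * (max t z.1)⁻¹ *
      hfun γ z.1 ^ k * (z.2 ^ (-γ) * (max z.1 z.2)⁻¹)) ∂(μ.prod μ) :=
    integral_prod_swap fun z : ℝ × ℝ =>
      z.1 ^ (-γ) * (max t z.1)⁻¹ * hfun γ z.1 ^ k * (z.2 ^ (-γ) * (max z.1 z.2)⁻¹)
  have hptwise : ∀ᵐ z ∂(μ.prod μ),
      z.1 ^ (-γ) * (max t z.1)⁻¹ * hfun γ z.1 ^ k * (z.2 ^ (-γ) * (max t z.2)⁻¹) ≤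
      z.1 ^ (-γ) * (max t z.1)⁻¹ * hfun γ z.1 ^ k * (z.2 ^ (-γ) * (max z.1 z.2)⁻¹) +
      z.2 ^ (-γ) * (max t z.2)⁻¹ * hfun γ z.2 ^ k * (z.1 ^ (-γ) * (max z.2 z.1)⁻¹) := by
    have hae : ∀ᵐ z ∂(μ.prod μ), z ∈ (Ioi (1:ℝ)) ×ˢ (Ioi (1:ℝ)) := by
      rw [hμdef, Measure.prod_restrict]
      exact ae_restrict_mem (measurableSet_Ioi.prod measurableSet_Ioi)
    filter_upwards [hae] with z hz
    obtain ⟨hz1, hz2⟩ := hz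
    have h1 : (1:ℝ) ≤ z.1 := le_of_lt hz1
    have h2 : (1:ℝ) ≤ z.2 := le_of_lt hz2
    have h10 : (0:ℝ) < z.1 := lt_of_lt_of_le one_pos h1
    have h20 : (0:ℝ) < z.2 := lt_of_lt_of_le one_pos h2
    have hkey := key_pointwise (γ := γ) hγ k ht h1 h2
    have hnn : (0:ℝ) ≤ z.1 ^ (-γ) * z.2 ^ (-γ) :=
      mul_nonneg (rpow_nonneg h10.le _) (rpow_nonneg h20.le _)
    calc z.1 ^ (-γ) * (max t z.1)⁻¹ * hfun γ z.1 ^ k * (z.2 ^ (-γ) * (max t z.2)⁻¹)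
        = (z.1 ^ (-γ) * z.2 ^ (-γ)) *
          ((max t z.1)⁻¹ * (max t z.2)⁻¹ * hfun γ z.1 ^ k) := by ring
      _ ≤ (z.1 ^ (-γ) * z.2 ^ (-γ)) *
          ((max t z.1)⁻¹ * (max z.1 z.2)⁻¹ * hfun γ z.1 ^ k +
           (max t z.2)⁻¹ * (max z.2 z.1)⁻¹ * hfun γ z.2 ^ k) :=
        mul_le_mul_of_nonneg_left hkey hnn
      _ = _ := by ring
  calc hfun γ t * Qfun γ k t
      = ∫ z, (z.1 ^ (-γ) * (max t z.1)⁻¹ * hfun γ z.1 ^ k *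
        (z.2 ^ (-γ) * (max t z.2)⁻¹)) ∂(μ.prod μ) := e1
    _ ≤ ∫ z, (z.1 ^ (-γ) * (max t z.1)⁻¹ * hfun γ z.1 ^ k *
        (z.2 ^ (-γ) * (max z.1 z.2)⁻¹) +
        z.2 ^ (-γ) * (max t z.2)⁻¹ * hfun γ z.2 ^ k *
        (z.1 ^ (-γ) * (max z.2 z.1)⁻¹)) ∂(μ.prod μ) :=
        integral_mono_ae intF (intG.add intGswap) hptwise
    _ = (∫ z, (z.1 ^ (-γ) * (max t z.1)⁻¹ * hfun γ z.1 ^ k *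
        (z.2 ^ (-γ) * (max z.1 z.2)⁻¹)) ∂(μ.prod μ)) +
        ∫ z, (z.2 ^ (-γ) * (max t z.2)⁻¹ * hfun γ z.2 ^ k *
        (z.1 ^ (-γ) * (max z.2 z.1)⁻¹)) ∂(μ.prod μ) := integral_add intG intGswap
    _ = 2 * Qfun γ m t := by rw [e3, ← e2]; ring
end
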